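/- Let (v_1,…,v_n) be a set monotonic valuation profile with m > n and 0 ≤ m|_n ≤ 1. If at least n−1 of the agents have ⟨⌊m/n⌋−1, ⌊m/n⌋⟩-size monotonic valuation functions, then an EFX allocation exists at (v_1,…,v_n). -/

import Mathlib

open Finset

/-- A valuation `v` on subsets of `E` is set monotonic if larger sets (by inclusion)
have larger value. -/
def SetMonotonic {α : Type*} (E : Finset α) (v : Finset α → ℝ) : Prop :=
  ∀ X Y : Finset α, X ⊆ Y → Y ⊆ E → v X ≤ v Y

/-- `⟨k,l⟩`-set monotonicity: monotone along inclusions whose cardinalities lie in `[k,l]`. -/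
def SetMonotonicKL {α : Type*} (E : Finset α) (k l : ℕ) (v : Finset α → ℝ) : Prop :=
  ∀ X Y : Finset α, X ⊆ Y → Y ⊆ E → k ≤ X.card → X.card < Y.card → Y.card ≤ l → v X ≤ v Y

/-- `⟨k,l⟩`-size monotonicity: any set of strictly larger cardinality (within `[k,l]`)
has larger value. -/
def SizeMonotonic {α : Type*} (E : Finset α) (k l : ℕ) (v : Finset α → ℝ) : Prop :=
  ∀ X Y : Finset α, X ⊆ E → Y ⊆ E → X ≠ Y →
    k ≤ X.card → X.card < Y.card → Y.card ≤ l → v X ≤ v Y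

/-- An allocation of the goods `E` among `n` agents: pairwise disjoint bundles
whose union is `E`. -/
def IsAllocation {α : Type*} [DecidableEq α] (E : Finset α) {n : ℕ}
    (X : Fin n → Finset α) : Prop :=
  (∀ i, X i ⊆ E) ∧ (∀ i j : Fin n, i ≠ j → Disjoint (X i) (X j)) ∧
    Finset.univ.biUnion X = E

/-- `X E_v Y` : `X` is envy-free from `Y` up to any one item at valuation `v`. -/
def EFXpref {α : Type*} [DecidableEq α] (v : Finset α → ℝ) (X Y : Finset α) : Prop :=
  ∀ y ∈ Y, v (Y.erase y) ≤ v X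

/-- An allocation is EFX at a profile `v` if every agent is envy-free up to any one good
from every other agent's bundle. -/
def IsEFX {α : Type*} [DecidableEq α] {n : ℕ} (v : Fin n → Finset α → ℝ)
    (X : Fin n → Finset α) : Prop :=
  ∀ i j : Fin n, EFXpref (v i) (X i) (X j)

/-- Any finset can be partitioned into parts of any prescribed cardinalities summing to its
cardinality. -/
lemma exists_partition_aux {α : Type*} [DecidableEq α] :
    ∀ (n : ℕ) (F : Finset α) (c : Fin n → ℕ), (∑ i, c i) = F.card →
      ∃ X : Fin n → Finset α, (∀ i, X i ⊆ F) ∧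
        (∀ i j, i ≠ j → Disjoint (X i) (X j)) ∧
        Finset.univ.biUnion X = F ∧ (∀ i, (X i).card = c i) := by
  intro n
  induction n with
  | zero =>
      intro F c h
      refine ⟨fun _ => ∅, by simp, by simp, ?_, by simp⟩
      have : F.card = 0 := by simpa using h.symm
      simp [Finset.card_eq_zero.mp this]
  | succ n ih =>
      intro F c h
      have h0 : c 0 ≤ F.card := by
        rw [Fin.sum_univ_succ] at h; omega
      obtain ⟨X0, hX0F, hX0c⟩ := Finset.exists_subset_card_eq h0
      have hF' : (∑ i : Fin n, c i.succ) = (F \ X0).card := by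
        rw [Finset.card_sdiff_of_subset hX0F]
        rw [Fin.sum_univ_succ] at h
        have := Finset.card_le_card hX0F
        omega
      obtain ⟨Y, hY1, hY2, hY3, hY4⟩ := ih (F \ X0) (fun i => c i.succ) hF'
      refine ⟨Fin.cases X0 Y, ?_, ?_, ?_, ?_⟩
      · intro i
        rcases Fin.eq_zero_or_eq_succ i with rfl | ⟨j, rfl⟩
        · simpa using hX0F
        · simpa using (hY1 j).trans Finset.sdiff_subset
      · intro i j hij
        rcases Fin.eq_zero_or_eq_succ i with rfl | ⟨i', rfl⟩ <;>
          rcases Fin.eq_zero_or_eq_succ j with rfl | ⟨j', rfl⟩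
        · exact absurd rfl hij
        · simpa using Disjoint.mono_right (hY1 j') Finset.disjoint_sdiff
        · simpa using (Disjoint.mono_right (hY1 i') Finset.disjoint_sdiff).symm
        · have : i' ≠ j' := fun hh => hij (by rw [hh])
          simpa using hY2 i' j' this
      · ext a
        simp only [Finset.mem_biUnion, Finset.mem_univ, true_and]
        constructor
        · rintro ⟨i, hi⟩
          rcases Fin.eq_zero_or_eq_succ i with rfl | ⟨j, rfl⟩
          · exact hX0F (by simpa using hi)
          · exact Finset.sdiff_subset (hY1 j (by simpa using hi))
        · intro ha
          by_cases h0 : a ∈ X0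
          · exact ⟨0, by simpa⟩
          · have hmem : a ∈ F \ X0 := Finset.mem_sdiff.mpr ⟨ha, h0⟩
            rw [← hY3] at hmem
            obtain ⟨i, -, hi⟩ := Finset.mem_biUnion.mp hmem
            exact ⟨i.succ, by simpa⟩
      · intro i
        rcases Fin.eq_zero_or_eq_succ i with rfl | ⟨j, rfl⟩
        · simpa using hX0c
        · simpa using hY4 j

/-- Theorem 2(i): With `m > n` goods and `m mod n ≤ 1`, if at least `n-1`
agents have `⟨⌊m/n⌋-1, ⌊m/n⌋⟩`-size monotonic set monotonic valuations, an EFX allocation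
exists. -/
theorem efx_exists_n_sub_one_size_monotonic_i {α : Type*} [DecidableEq α] (n m : ℕ)
    (hn : 2 ≤ n) (E : Finset α) (hE : E.card = m) (hmn : n < m)
    (hr : m % n ≤ 1)
    (v : Fin n → Finset α → ℝ)
    (hmono : ∀ i, SetMonotonic E (v i))
    (S : Finset (Fin n)) (hScard : n - 1 ≤ S.card)
    (hsize : ∀ i ∈ S, SizeMonotonic E (m / n - 1) (m / n) (v i)) :
    ∃ X : Fin n → Finset α, IsAllocation E X ∧ IsEFX v X := by
  classical
  set q := m / n with hqdef
  set r := m % n with hrdef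
  have hn0 : 0 < n := by omega
  have hq1 : 1 ≤ q := (Nat.one_le_div_iff hn0).mpr (le_of_lt hmn)
  have hm : n * q + r = m := Nat.div_add_mod m n
  -- choose the special agent i0 : everyone else is in S
  obtain ⟨i0, hi0⟩ : ∃ i0 : Fin n, ∀ i, i ≠ i0 → i ∈ S := by
    by_cases hSc : Sᶜ = (∅ : Finset (Fin n))
    · have hSu : S = Finset.univ := (Finset.compl_eq_empty_iff S).mp hSc
      exact ⟨⟨0, hn0⟩, fun i _ => hSu ▸ Finset.mem_univ i⟩
    · obtain ⟨i0, hi0⟩ := Finset.nonempty_iff_ne_empty.mpr hSc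
      refine ⟨i0, fun i hi => ?_⟩
      by_contra hiS
      have h2 : 1 < Sᶜ.card :=
        Finset.one_lt_card.mpr ⟨i, Finset.mem_compl.mpr hiS, i0, hi0, hi⟩
      have hcc : Sᶜ.card = n - S.card := by
        rw [Finset.card_compl]; simp
      have hle : S.card ≤ n := le_of_le_of_eq (Finset.card_le_univ S) (by simp)
      omega
  -- choose the owner of the big bundle
  obtain ⟨jstar, hjstar⟩ : ∃ j : Fin n, j ≠ i0 := by
    have : Nontrivial (Fin n) := by
      rw [← Fintype.one_lt_card_iff_nontrivial, Fintype.card_fin]; omega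
    exact exists_ne i0
  have hi0j : i0 ≠ jstar := fun h => hjstar h.symm
  -- choose B, the best q-subset for i0
  have hqm : q ≤ E.card := by rw [hE]; exact Nat.div_le_self m n
  obtain ⟨B0, hB0E, hB0q⟩ := Finset.exists_subset_card_eq hqm
  have hTne : (E.powerset.filter (fun Z => Z.card = q)).Nonempty :=
    ⟨B0, by simp [Finset.mem_filter, Finset.mem_powerset, hB0E, hB0q]⟩
  obtain ⟨B, hBT, hBmax⟩ :=
    Finset.exists_max_image (E.powerset.filter (fun Z => Z.card = q)) (v i0) hTne
  have hBE : B ⊆ E := Finset.mem_powerset.mp (Finset.mem_filter.mp hBT).1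
  have hBq : B.card = q := (Finset.mem_filter.mp hBT).2
  have hBbest : ∀ Z, Z ⊆ E → Z.card = q → v i0 Z ≤ v i0 B := fun Z hZ hZc =>
    hBmax Z (by simp [Finset.mem_filter, Finset.mem_powerset, hZ, hZc])
  have hi0best : ∀ W, W ⊆ E → W.card ≤ q → v i0 W ≤ v i0 B := by
    intro W hWE hWq
    obtain ⟨Z, hWZ, hZE, hZc⟩ :=
      Finset.exists_subsuperset_card_eq hWE hWq (by rw [hE]; exact hqm.trans_eq hE)
    exact (hmono i0 W Z hWZ hZE).trans (hBbest Z hZE hZc)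
  -- the target cardinalities
  set cc : Fin n → ℕ := fun i => if i = jstar then q + r else q with hccdef
  have hccj : cc jstar = q + r := by simp [hccdef]
  have hccother : ∀ i, i ≠ jstar → cc i = q := by intro i hi; simp [hccdef, hi]
  -- the finite collection of candidate allocations
  set P : (Fin n → Finset α) → Prop := fun X =>
    X i0 = B ∧ (∀ i, (X i).card = cc i) ∧
      (∀ i j, i ≠ j → Disjoint (X i) (X j)) ∧ Finset.univ.biUnion X = E with hPdef
  set A := (Fintype.piFinset fun _ : Fin n => E.powerset).filter P with hAdef
  have hAmem : ∀ X, X ∈ A ↔ (∀ i, X i ⊆ E) ∧ P X := by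
    intro X
    rw [hAdef, Finset.mem_filter, Fintype.mem_piFinset]
    simp only [Finset.mem_powerset]
  -- A is nonempty
  have hAne : A.Nonempty := by
    have hjc : jstar ∈ Finset.univ.erase i0 :=
      Finset.mem_erase.mpr ⟨hjstar, Finset.mem_univ _⟩
    have hsum : (∑ i : Fin n, (if i = i0 then 0 else cc i)) = (E \ B).card := by
      have e1 := Finset.sum_erase_add Finset.univ
        (fun i => if i = i0 then 0 else cc i) (Finset.mem_univ i0)
      have e2 := Finset.sum_erase_add (Finset.univ.erase i0)
        (fun i => if i = i0 then 0 else cc i) hjc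
      have e3 : ∑ i ∈ (Finset.univ.erase i0).erase jstar,
          (if i = i0 then 0 else cc i) = ((Finset.univ.erase i0).erase jstar).card * q := by
        rw [Finset.sum_congr rfl (fun x hx => ?_), Finset.sum_const, smul_eq_mul]
        simp only [Finset.mem_erase] at hx
        rw [if_neg hx.2.1, hccother x hx.1]
      have e4 : ((Finset.univ.erase i0).erase jstar).card = n - 2 := by
        rw [Finset.card_erase_of_mem hjc, Finset.card_erase_of_mem (Finset.mem_univ i0)]
        simp only [Finset.card_univ, Fintype.card_fin]
        omega
      have e5 : (E \ B).card = m - q := by rw [Finset.card_sdiff_of_subset hBE, hE, hBq]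
      have e6 : (if jstar = i0 then 0 else cc jstar) = q + r := by
        rw [if_neg hjstar, hccj]
      have e7 : (if i0 = i0 then 0 else cc i0) = 0 := by simp
      rw [← e1, ← e2, e3, e4, e5]
      show (n - 2) * q + (if jstar = i0 then 0 else cc jstar) +
        (if i0 = i0 then 0 else cc i0) = m - q
      rw [e6, e7]
      obtain ⟨k, rfl⟩ : ∃ k, n = 2 + k := ⟨n - 2, by omega⟩
      have e8 : (2 + k - 2) = k := by omega
      have e9 : (2 + k) * q = 2 * q + k * q := by ring
      rw [e8]
      obtain ⟨t, ht⟩ : ∃ t, k * q = t := ⟨_, rfl⟩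
      rw [ht]
      rw [e9, ht] at hm
      omega
    obtain ⟨Y, hY1, hY2, hY3, hY4⟩ := exists_partition_aux n (E \ B)
      (fun i => if i = i0 then 0 else cc i) hsum
    refine ⟨fun i => if i = i0 then B else Y i, (hAmem _).mpr ⟨?_, ?_, ?_, ?_, ?_⟩⟩
    · intro i
      by_cases h : i = i0
      · simpa [h] using hBE
      · simpa [h] using (hY1 i).trans Finset.sdiff_subset
    · simp
    · intro i
      show (if i = i0 then B else Y i).card = cc i
      by_cases h : i = i0
      · rw [if_pos h, h, hccother i0 hi0j, hBq]
      · simpa [h] using (hY4 i).trans (by rw [if_neg h])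
    · intro i j hij
      by_cases h1 : i = i0 <;> by_cases h2 : j = i0
      · exact absurd (h1.trans h2.symm) hij
      · simp only [if_pos h1, if_neg h2]
        exact Disjoint.mono_right (hY1 j) Finset.sdiff_disjoint.symm
      · simp only [if_neg h1, if_pos h2]
        exact Disjoint.mono_left (hY1 i) Finset.sdiff_disjoint
      · simp only [if_neg h1, if_neg h2]
        exact hY2 i j hij
    · ext a
      simp only [Finset.mem_biUnion, Finset.mem_univ, true_and]
      constructor
      · rintro ⟨i, hi⟩
        by_cases h : i = i0
        · exact hBE (by simpa [h] using hi)
        · exact (Finset.sdiff_subset (s := E) (t := B)) (hY1 i (by simpa [h] using hi))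
      · intro ha
        by_cases hB : a ∈ B
        · exact ⟨i0, by simpa⟩
        · have hmem : a ∈ E \ B := Finset.mem_sdiff.mpr ⟨ha, hB⟩
          rw [← hY3] at hmem
          obtain ⟨i, -, hi⟩ := Finset.mem_biUnion.mp hmem
          by_cases h : i = i0
          · rw [h] at hi
            have : (Y i0).card = 0 := by simpa using hY4 i0
            rw [Finset.card_eq_zero.mp this] at hi
            simp at hi
          · exact ⟨i, by simpa [h] using hi⟩
  -- pick a maximizer of total welfare of the ordinary agents
  set idx := (Finset.univ.erase i0).erase jstar with hidxdef
  obtain ⟨X, hXA, hXmax⟩ :=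
    Finset.exists_max_image A (fun X => ∑ k ∈ idx, v k (X k)) hAne
  obtain ⟨hXsub, hXB, hXcard, hXdisj, hXunion⟩ := (hAmem X).mp hXA
  have hXjcard : (X jstar).card = q + r := by rw [hXcard jstar, hccj]
  have hXocard : ∀ i, i ≠ jstar → (X i).card = q := fun i hi =>
    (hXcard i).trans (hccother i hi)
  -- the key exchange argument
  have claimA : ∀ i, i ≠ i0 → i ≠ jstar → ∀ Z, Z ⊆ X jstar → Z.card = q →
      v i Z ≤ v i (X i) := by
    intro i hii0 hijs Z hZsub hZq
    set X' : Fin n → Finset α := fun k =>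
      if k = i then Z else if k = jstar then X i ∪ (X jstar \ Z) else X k with hX'def
    have hX'i : X' i = Z := by simp [hX'def]
    have hX'j : X' jstar = X i ∪ (X jstar \ Z) := by
      show (if jstar = i then Z else if jstar = jstar then X i ∪ (X jstar \ Z)
        else X jstar) = X i ∪ (X jstar \ Z)
      rw [if_neg (show ¬jstar = i from fun h => hijs h.symm), if_pos rfl]
    have hX'o : ∀ k, k ≠ i → k ≠ jstar → X' k = X k := by
      intro k h1 h2; simp [hX'def, h1, h2]
    have hdisjIJ : Disjoint (X i) (X jstar) := hXdisj i jstar hijs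
    have hZXb : ∀ b, b ≠ jstar → Disjoint Z (X b) := fun b hb =>
      Disjoint.mono_left hZsub (hXdisj jstar b (fun h => hb h.symm))
    have hZJ : Disjoint Z (X i ∪ (X jstar \ Z)) := by
      rw [Finset.disjoint_union_right]
      exact ⟨hZXb i hijs, Finset.disjoint_sdiff⟩
    have hJXb : ∀ b, b ≠ i → b ≠ jstar → Disjoint (X i ∪ (X jstar \ Z)) (X b) := by
      intro b hb1 hb2
      rw [Finset.disjoint_union_left]
      exact ⟨hXdisj i b (fun h => hb1 h.symm),
        Disjoint.mono_left Finset.sdiff_subset (hXdisj jstar b (fun h => hb2 h.symm))⟩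
    have hX'A : X' ∈ A := by
      refine (hAmem X').mpr ⟨?_, ?_, ?_, ?_, ?_⟩
      · intro k
        by_cases h1 : k = i
        · rw [h1, hX'i]; exact hZsub.trans (hXsub jstar)
        · by_cases h2 : k = jstar
          · rw [h2, hX'j]
            exact Finset.union_subset (hXsub i) (Finset.sdiff_subset.trans (hXsub jstar))
          · rw [hX'o k h1 h2]; exact hXsub k
      · rw [hX'o i0 (fun h => hii0 h.symm) hi0j]; exact hXB
      · intro k
        by_cases h1 : k = i
        · rw [h1, hX'i, hZq, hccother i hijs]
        · by_cases h2 : k = jstar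
          · rw [h2, hX'j, hccj,
              Finset.card_union_of_disjoint
                (Disjoint.mono_right Finset.sdiff_subset hdisjIJ),
              Finset.card_sdiff_of_subset hZsub, hXjcard, hZq, hXocard i hijs]
            omega
          · rw [hX'o k h1 h2]; exact hXcard k
      · intro a b hab
        rcases eq_or_ne a i with rfl | ha1
        · rcases eq_or_ne b jstar with rfl | hb2
          · rw [hX'i, hX'j]; exact hZJ
          · rw [hX'i, hX'o b (fun h => hab h.symm) hb2]
            exact hZXb b hb2
        · rcases eq_or_ne b i with rfl | hb1
          · rcases eq_or_ne a jstar with rfl | ha2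
            · rw [hX'i, hX'j]; exact hZJ.symm
            · rw [hX'i, hX'o a ha1 ha2]; exact (hZXb a ha2).symm
          · rcases eq_or_ne a jstar with rfl | ha2
            · rw [hX'j, hX'o b hb1 (fun h => hab h.symm)]
              exact hJXb b hb1 (fun h => hab h.symm)
            · rcases eq_or_ne b jstar with rfl | hb2
              · rw [hX'j, hX'o a ha1 ha2]
                exact (hJXb a ha1 ha2).symm
              · rw [hX'o a ha1 ha2, hX'o b hb1 hb2]
                exact hXdisj a b hab
      · rw [← hXunion]
        ext x
        simp only [Finset.mem_biUnion, Finset.mem_univ, true_and]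
        constructor
        · rintro ⟨k, hk⟩
          by_cases h1 : k = i
          · rw [h1, hX'i] at hk
            exact ⟨jstar, hZsub hk⟩
          · by_cases h2 : k = jstar
            · rw [h2, hX'j, Finset.mem_union] at hk
              rcases hk with h | h
              · exact ⟨i, h⟩
              · exact ⟨jstar, (Finset.mem_sdiff.mp h).1⟩
            · exact ⟨k, by rwa [hX'o k h1 h2] at hk⟩
        · rintro ⟨k, hk⟩
          by_cases h1 : k = i
          · refine ⟨jstar, ?_⟩
            rw [hX'j, Finset.mem_union]
            exact Or.inl (h1 ▸ hk)
          · by_cases h2 : k = jstar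
            · by_cases h3 : x ∈ Z
              · exact ⟨i, by rwa [hX'i]⟩
              · refine ⟨jstar, ?_⟩
                rw [hX'j, Finset.mem_union]
                exact Or.inr (Finset.mem_sdiff.mpr ⟨h2 ▸ hk, h3⟩)
            · exact ⟨k, by rwa [hX'o k h1 h2]⟩
    have hiidx : i ∈ idx := by
      rw [hidxdef]
      exact Finset.mem_erase.mpr ⟨hijs, Finset.mem_erase.mpr ⟨hii0, Finset.mem_univ _⟩⟩
    have hrest : ∑ k ∈ idx.erase i, v k (X' k) = ∑ k ∈ idx.erase i, v k (X k) := by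
      refine Finset.sum_congr rfl (fun k hk => ?_)
      rw [Finset.mem_erase, hidxdef, Finset.mem_erase] at hk
      rw [hX'o k hk.1 hk.2.1]
    have key : v i Z + ∑ k ∈ idx.erase i, v k (X k) ≤
        v i (X i) + ∑ k ∈ idx.erase i, v k (X k) := by
      calc v i Z + ∑ k ∈ idx.erase i, v k (X k)
          = v i (X' i) + ∑ k ∈ idx.erase i, v k (X' k) := by rw [hX'i, hrest]
        _ = ∑ k ∈ idx, v k (X' k) := Finset.add_sum_erase idx (fun k => v k (X' k)) hiidx
        _ ≤ ∑ k ∈ idx, v k (X k) := hXmax X' hX'A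
        _ = v i (X i) + ∑ k ∈ idx.erase i, v k (X k) :=
            (Finset.add_sum_erase idx (fun k => v k (X k)) hiidx).symm
    linarith
  -- assemble the EFX proof
  refine ⟨X, ⟨hXsub, hXdisj, hXunion⟩, ?_⟩
  intro i j y hy
  set W := (X j).erase y with hWdef
  have hWsub : W ⊆ X j := Finset.erase_subset y (X j)
  have hWE : W ⊆ E := hWsub.trans (hXsub j)
  have hWcard : W.card = (X j).card - 1 := Finset.card_erase_of_mem hy
  by_cases hij : i = j
  · exact hmono i W (X i) (hij ▸ hWsub) (hXsub i)
  by_cases hii0 : i = i0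
  · subst hii0
    rw [hXB]
    refine hi0best W hWE ?_
    by_cases hjj : j = jstar
    · rw [hWcard, hjj, hXjcard]; omega
    · rw [hWcard, hXocard j hjj]; omega
  · have hiS : i ∈ S := hi0 i hii0
    by_cases hWq : W.card = q
    · have hjj : j = jstar := by
        by_contra hjj
        rw [hWcard, hXocard j hjj] at hWq
        omega
      exact claimA i hii0 (hjj ▸ hij) W (hjj ▸ hWsub) hWq
    · have hWq1 : W.card = q - 1 := by
        by_cases hjj : j = jstar
        · rw [hWcard, hjj, hXjcard]
          rw [hWcard, hjj, hXjcard] at hWq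
          omega
        · rw [hWcard, hXocard j hjj]
      obtain ⟨X', hX'Xi, hX'q⟩ : ∃ X' ⊆ X i, X'.card = q := by
        by_cases hijs : i = jstar
        · exact Finset.exists_subset_card_eq (s := X i) (n := q) (by rw [hijs, hXjcard]; omega)
        · exact ⟨X i, Finset.Subset.refl _, hXocard i hijs⟩
      have hX'E : X' ⊆ E := hX'Xi.trans (hXsub i)
      have hne : W ≠ X' := by
        intro h
        rw [h, hX'q] at hWq1
        omega
      have h1 : v i W ≤ v i X' :=
        hsize i hiS W X' hWE hX'E hne (le_of_eq hWq1.symm)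
          (by rw [hWq1, hX'q]; omega) (le_of_eq hX'q)
      exact h1.trans (hmono i X' (X i) hX'Xi (hXsub i))
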